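/- Let i ≥ 1 and let J ⊆ 𝔖 be an ideal containing u^s and p^N for some s, N ∈ ℕ, and satisfying E^{i−1}·J ⊆ Ideal.map φ J (the ideal of 𝔖 generated by φ(J)). If e·(i−1) = p−1, then u ∈ J and p ∈ J. (This is the annihilator-ideal core of Theorem 'control of u-torsion' part (3): applied to the annihilator of the u^∞-torsion of i-th mod p^n prismatic cohomology it shows that this torsion module is killed by (p,u).) -/

import Mathlib

namespace Stmt7Aux

open PowerSeries

variable {p : ℕ} [Fact p.Prime] {k : Type*} [Field k] [CharP k p] [PerfectField k]

local notation "W" => WittVector p k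
local notation "S" => PowerSeries (WittVector p k)

noncomputable def Fi : W ≃+* W := (WittVector.frobeniusEquiv p k).symm

lemma Fi_frob (x : W) : Fi (WittVector.frobenius x) = x := by
  simpa [Fi] using (WittVector.frobeniusEquiv p k).symm_apply_apply x

lemma frob_Fi (x : W) : WittVector.frobenius (Fi x : W) = x := by
  simpa [Fi] using (WittVector.frobeniusEquiv p k).apply_symm_apply x

lemma pdvd_iff (x : W) : (p : W) ∣ x ↔ x.coeff 0 = 0 := by
  constructor
  · rintro ⟨y, rfl⟩
    rw [mul_comm, ← WittVector.verschiebung_frobenius y]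
    exact WittVector.verschiebung_coeff_zero _
  · intro h
    have h1 : x = WittVector.verschiebung (x.shift 1) := by
      have := WittVector.eq_iterate_verschiebung (x := x) (n := 1) ?_
      · simpa using this
      · intro i hi; interval_cases i; exact h
    refine ⟨Fi (x.shift 1), ?_⟩
    have h2 : x.shift 1 = WittVector.frobenius (Fi (x.shift 1) : W) := (frob_Fi _).symm
    conv_lhs => rw [h1, h2, WittVector.verschiebung_frobenius]
    exact mul_comm _ _

lemma pdvd_Fi_iff (x : W) : (p : W) ∣ (Fi x : W) ↔ (p : W) ∣ x := by
  constructor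
  · rintro ⟨y, hy⟩
    refine ⟨WittVector.frobenius y, ?_⟩
    have := congrArg (WittVector.frobenius) hy
    rwa [frob_Fi, map_mul, map_natCast] at this
  · rintro ⟨y, rfl⟩
    exact ⟨Fi y, by rw [show ((p:W) * y) = ((p:W)*y) from rfl, map_mul, map_natCast]⟩

lemma isUnit_W_iff (x : W) : IsUnit x ↔ ¬ (p : W) ∣ x := by
  rw [pdvd_iff]
  constructor
  · intro hu h0
    have := (WittVector.constantCoeff : W →+* k).isUnit_map hu
    rw [WittVector.constantCoeff_apply, h0] at this
    exact not_isUnit_zero this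
  · intro h
    exact WittVector.isUnit_of_coeff_zero_ne_zero x h

lemma prime_p_W : Prime (p : W) := by
  refine ⟨?_, ?_, ?_⟩
  · intro h0
    have := congrArg (fun z : W => z.coeff 1) h0
    simp only [WittVector.coeff_p_one, WittVector.zero_coeff] at this
    exact one_ne_zero this
  · rw [isUnit_W_iff]; simp
  · intro a b hab
    rw [pdvd_iff] at hab ⊢
    rw [pdvd_iff (x := b)]
    rw [WittVector.mul_coeff_zero] at hab
    exact mul_eq_zero.mp hab

end Stmt7Aux

set_option linter.unusedSectionVars false
namespace Stmt7Aux2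

open PowerSeries Stmt7Aux

variable {p : ℕ} [Fact p.Prime] {k : Type*} [Field k] [CharP k p] [PerfectField k]

local notation "W" => WittVector p k
local notation "S" => PowerSeries (WittVector p k)

variable {φ : PowerSeries (WittVector p k) →+* PowerSeries (WittVector p k)}

lemma coeff_phi (hφu : φ (X : S) = (X : S) ^ p)
    (hφC : ∀ a : W, φ (C a) = C (WittVector.frobenius a)) (x : S) (n : ℕ) :
    coeff n (φ x) = if p ∣ n then WittVector.frobenius (coeff (n / p) x) else 0 := by
  have hp0 : 0 < p := (Fact.out : p.Prime).pos
  set b := n + 1 with hb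
  have hdvd : (X : S) ^ b ∣ x - ∑ m ∈ Finset.range b, C (coeff m x) * X ^ m := by
    rw [X_pow_dvd_iff]
    intro m hm
    rw [map_sub, map_sum, sub_eq_zero]
    rw [Finset.sum_eq_single m]
    · rw [coeff_C_mul, coeff_X_pow, if_pos rfl, mul_one]
    · intro j _ hj
      rw [coeff_C_mul, coeff_X_pow, if_neg (Ne.symm hj), mul_zero]
    · intro hmem; exact absurd (Finset.mem_range.mpr hm) hmem
  obtain ⟨y, hy⟩ := hdvd
  have hx : x = (∑ m ∈ Finset.range b, C (coeff m x) * X ^ m) + X ^ b * y := by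
    rw [← hy]; ring
  have hφx : φ x = (∑ m ∈ Finset.range b, C (WittVector.frobenius (coeff m x)) * X ^ (p * m))
      + X ^ (p * b) * φ y := by
    conv_lhs => rw [hx]
    rw [map_add, map_sum, map_mul, map_pow, hφu, ← pow_mul]
    congr 1
    refine Finset.sum_congr rfl fun m _ => ?_
    rw [map_mul, hφC, map_pow, hφu, ← pow_mul]
  rw [hφx, map_add]
  have h2 : coeff n ((X : S) ^ (p * b) * φ y) = 0 := by
    rw [coeff_X_pow_mul']
    rw [if_neg]
    intro hle
    have : p * b ≤ n := hle
    nlinarith [hp0]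
  rw [h2, add_zero, map_sum]
  by_cases hdn : p ∣ n
  · obtain ⟨m₀, rfl⟩ := hdn
    rw [Finset.sum_eq_single m₀]
    · rw [coeff_C_mul, coeff_X_pow, if_pos rfl, mul_one, if_pos ⟨m₀, rfl⟩,
        Nat.mul_div_cancel_left _ hp0]
    · intro j _ hj
      rw [coeff_C_mul, coeff_X_pow, if_neg, mul_zero]
      intro hmul
      exact hj (Nat.eq_of_mul_eq_mul_left hp0 hmul.symm)
    · intro hmem
      exfalso
      apply hmem
      rw [Finset.mem_range]
      calc m₀ ≤ p * m₀ := Nat.le_mul_of_pos_left _ hp0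
        _ < p * m₀ + 1 := Nat.lt_succ_self _
  · rw [if_neg hdn]
    apply Finset.sum_eq_zero
    intro j _
    rw [coeff_C_mul, coeff_X_pow, if_neg, mul_zero]
    rintro rfl
    exact hdn ⟨j, rfl⟩

/-- the `j`-th φ-digit of a power series -/
noncomputable def dig (j : ℕ) (x : S) : S := PowerSeries.mk fun b => Fi (coeff (p * b + j) x)

lemma coeff_dig (j : ℕ) (x : S) (b : ℕ) :
    coeff b (dig j x) = Fi (coeff (p * b + j) x) := coeff_mk _ _

lemma dig_add (j : ℕ) (x y : S) : dig j (x + y) = dig j x + dig j y := by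
  ext b; simp [coeff_dig, map_add]

lemma dig_zero (j : ℕ) : dig (p := p) (k := k) j 0 = 0 := by
  ext b; simp [coeff_dig]

/-- `dig j` as an additive monoid hom -/
noncomputable def digHom (j : ℕ) : S →+ S :=
  { toFun := dig j, map_zero' := dig_zero j, map_add' := dig_add j }

lemma coeff_phi_dig_sum (hφu : φ (X : S) = (X : S) ^ p)
    (hφC : ∀ a : W, φ (C a) = C (WittVector.frobenius a)) (z : ℕ → S) (n : ℕ) :
    coeff n (∑ j ∈ Finset.range p, φ (z j) * X ^ j) =
      WittVector.frobenius (coeff (n / p) (z (n % p))) := by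
  have hp0 : 0 < p := (Fact.out : p.Prime).pos
  rw [map_sum]
  rw [Finset.sum_eq_single (n % p)]
  · have hsub : n - n % p = p * (n / p) := by
      have := Nat.div_add_mod n p; omega
    rw [coeff_mul_X_pow', if_pos (Nat.mod_le n p), coeff_phi hφu hφC]
    have hdvd : p ∣ n - n % p := ⟨n / p, hsub⟩
    rw [if_pos hdvd, hsub, Nat.mul_div_cancel_left _ hp0]
  · intro j hj hne
    rw [coeff_mul_X_pow']
    split_ifs with hle
    · rw [coeff_phi hφu hφC]
      rw [if_neg]
      intro hdvd
      apply hne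
      have hjlt : j < p := Finset.mem_range.mp hj
      have hthis : j % p = n % p := (Nat.modEq_iff_dvd' hle).mpr hdvd
      rw [Nat.mod_eq_of_lt hjlt] at hthis
      exact hthis
    · rfl
  · intro hmem
    exact absurd (Finset.mem_range.mpr (Nat.mod_lt n hp0)) hmem

lemma dig_sum_eq (hφu : φ (X : S) = (X : S) ^ p)
    (hφC : ∀ a : W, φ (C a) = C (WittVector.frobenius a)) (x : S) :
    ∑ j ∈ Finset.range p, φ (dig j x) * X ^ j = x := by
  refine PowerSeries.ext fun n => ?_
  have hh : p * (n / p) + n % p = n := Nat.div_add_mod n p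
  rw [coeff_phi_dig_sum hφu hφC, coeff_dig, hh, frob_Fi]

lemma dig_unique (hφu : φ (X : S) = (X : S) ^ p)
    (hφC : ∀ a : W, φ (C a) = C (WittVector.frobenius a)) (z : ℕ → S) {x : S}
    (hx : x = ∑ j ∈ Finset.range p, φ (z j) * X ^ j) {j : ℕ} (hj : j < p) :
    dig j x = z j := by
  have hp0 : 0 < p := (Fact.out : p.Prime).pos
  refine PowerSeries.ext fun b => ?_
  rw [coeff_dig, hx, coeff_phi_dig_sum hφu hφC]
  have h1 : (p * b + j) % p = j := by rw [Nat.mul_add_mod, Nat.mod_eq_of_lt hj]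
  have h2 : (p * b + j) / p = b := by rw [Nat.mul_add_div hp0, Nat.div_eq_of_lt hj, add_zero]
  rw [h1, h2, Fi_frob]

end Stmt7Aux2

namespace Stmt7Aux2

variable {p : ℕ} [Fact p.Prime] {k : Type*} [Field k] [CharP k p] [PerfectField k]
  {φ : PowerSeries (WittVector p k) →+* PowerSeries (WittVector p k)}

open PowerSeries Stmt7Aux

local notation "W" => WittVector p k
local notation "S" => PowerSeries (WittVector p k)

lemma dig_phi (hφu : φ (X : S) = (X : S) ^ p)
    (hφC : ∀ a : W, φ (C a) = C (WittVector.frobenius a)) (y : S) {j : ℕ} (hj : j < p) :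
    dig j (φ y) = if j = 0 then y else 0 := by
  have hp0 : 0 < p := (Fact.out : p.Prime).pos
  have hsum : φ y = ∑ j' ∈ Finset.range p, φ (if j' = 0 then y else 0) * X ^ j' := by
    rw [Finset.sum_eq_single 0]
    · simp
    · intro j' _ hj'; simp [hj']
    · intro h; exact absurd (Finset.mem_range.mpr hp0) h
  exact dig_unique hφu hφC _ hsum hj

lemma dig_phi_mul (hφu : φ (X : S) = (X : S) ^ p)
    (hφC : ∀ a : W, φ (C a) = C (WittVector.frobenius a)) (s x : S) {j : ℕ} (hj : j < p) :
    dig j (φ s * x) = s * dig j x := by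
  have hsum : φ s * x = ∑ j' ∈ Finset.range p, φ (s * dig j' x) * X ^ j' := by
    conv_lhs => rw [← dig_sum_eq hφu hφC x]
    rw [Finset.mul_sum]
    refine Finset.sum_congr rfl fun j' _ => ?_
    rw [map_mul]; ring
  exact dig_unique hφu hφC _ hsum hj

lemma dig_X_succ (x : S) (j : ℕ) : dig (j + 1) ((X : S) * x) = dig j x := by
  refine PowerSeries.ext fun b => ?_
  rw [coeff_dig, coeff_dig, ← add_assoc, coeff_succ_X_mul]

lemma dig_X_zero (x : S) : dig 0 ((X : S) * x) = (X : S) * dig (p - 1) x := by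
  have hp0 : 0 < p := (Fact.out : p.Prime).pos
  refine PowerSeries.ext fun b => ?_
  rw [coeff_dig]
  cases b with
  | zero =>
    simp only [Nat.mul_zero, Nat.add_zero, coeff_zero_X_mul]
    rw [map_zero]
  | succ b =>
    have h1 : p * (b + 1) + 0 = (p * b + (p - 1)) + 1 := by
      rw [Nat.mul_succ]; omega
    rw [h1, coeff_succ_X_mul, coeff_succ_X_mul, coeff_dig]

lemma dig_p_mul (x : S) (j : ℕ) : dig j ((p : S) * x) = (p : S) * dig j x := by
  refine PowerSeries.ext fun b => ?_
  have hC : ((p : ℕ) : S) = C ((p : ℕ) : W) := (map_natCast (C (R := W)) p).symm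
  rw [coeff_dig, hC, coeff_C_mul, coeff_C_mul, coeff_dig, map_mul, map_natCast]

lemma dig_finsum {α : Type*} (t : Finset α) (f : α → S) (j : ℕ) :
    dig j (∑ a ∈ t, f a) = ∑ a ∈ t, dig j (f a) :=
  map_sum (digHom (p := p) (k := k) j) f t

/-- Membership in `Ideal.map φ J` is equivalent to all digits lying in `J`. -/
lemma mem_map_iff (hφu : φ (X : S) = (X : S) ^ p)
    (hφC : ∀ a : W, φ (C a) = C (WittVector.frobenius a)) (J : Ideal S) (x : S) :
    x ∈ Ideal.map φ J ↔ ∀ j, j < p → dig j x ∈ J := by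
  constructor
  · intro hx
    have hspan : Ideal.map φ J = Ideal.span (⇑φ '' (J : Set S)) := rfl
    rw [hspan] at hx
    refine Submodule.span_induction ?_ ?_ ?_ ?_ hx
    · rintro _ ⟨y, hy, rfl⟩ j hj
      rw [dig_phi hφu hφC y hj]
      split_ifs
      · exact hy
      · exact J.zero_mem
    · intro j _; rw [dig_zero]; exact J.zero_mem
    · intro x y _ _ hx hy j hj
      rw [dig_add]; exact J.add_mem (hx j hj) (hy j hj)
    · intro r x _ hx
      -- r • x = r * x ; decompose r into digits
      have hXpow : ∀ (m : ℕ) (y : S), (∀ j, j < p → dig j y ∈ J) →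
          ∀ j, j < p → dig j ((X : S) ^ m * y) ∈ J := by
        intro m
        induction m with
        | zero => intro y hy j hj; simpa using hy j hj
        | succ m ih =>
          intro y hy j hj
          have hrw : (X : S) ^ (m + 1) * y = (X : S) * ((X : S) ^ m * y) := by ring
          rw [hrw]
          rcases j with _ | j'
          · rw [dig_X_zero]
            exact J.mul_mem_left _ (ih y hy (p - 1) (by omega))
          · rw [dig_X_succ]
            exact ih y hy j' (by omega)
      intro j hj
      have hdec : r • x = ∑ j' ∈ Finset.range p, φ (dig j' r) * ((X : S) ^ j' * x) := by
        rw [smul_eq_mul]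
        conv_lhs => rw [← dig_sum_eq hφu hφC r]
        rw [Finset.sum_mul]
        refine Finset.sum_congr rfl fun j' _ => ?_
        ring
      rw [hdec, dig_finsum]
      refine J.sum_mem fun j' _ => ?_
      rw [dig_phi_mul hφu hφC _ _ hj]
      exact J.mul_mem_left _ (hXpow j' x hx j hj)
  · intro h
    suffices h2 : (∑ j ∈ Finset.range p, φ (dig j x) * (X : S) ^ j) ∈ Ideal.map φ J by
      rwa [dig_sum_eq hφu hφC x] at h2
    refine Ideal.sum_mem _ fun j hjm => ?_
    exact Ideal.mul_mem_right _ _ (Ideal.mem_map_of_mem φ (h j (Finset.mem_range.mp hjm)))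

end Stmt7Aux2

namespace Stmt7Aux3

variable {p : ℕ} [Fact p.Prime] {k : Type*} [Field k] [CharP k p] [PerfectField k]
  {φ : PowerSeries (WittVector p k) →+* PowerSeries (WittVector p k)}

open PowerSeries Stmt7Aux Stmt7Aux2

local notation "W" => WittVector p k
local notation "S" => PowerSeries (WittVector p k)

lemma pow_add_sq (A B : S) : ∀ n : ℕ, 1 ≤ n →
    ∃ R : S, (A + B) ^ n = A ^ n + (n : S) * A ^ (n - 1) * B + B ^ 2 * R := by
  intro n
  induction n with
  | zero => intro h; omega
  | succ n ih =>
    intro _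
    rcases Nat.eq_or_lt_of_le (Nat.zero_le n) with h0 | h0
    · refine ⟨0, ?_⟩
      rw [← h0]
      norm_num
    · obtain ⟨R, hR⟩ := ih h0
      refine ⟨A * R + (n : S) * A ^ (n - 1) + B * R, ?_⟩
      have hn : n - 1 + 1 = n := by omega
      have hcast : ((n : S) + 1) = ((n + 1 : ℕ) : S) := by push_cast; ring
      calc (A + B) ^ (n + 1) = (A + B) ^ n * (A + B) := by ring
        _ = (A ^ n + (n : S) * A ^ (n - 1) * B + B ^ 2 * R) * (A + B) := by rw [hR]
        _ = A ^ (n + 1) + ((n : S) + 1) * A ^ n * B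
              + B ^ 2 * (A * R + (n : S) * (A ^ (n - 1)) + B * R) := by
            have : A ^ (n-1) * A = A ^ n := by
              rw [← pow_succ, hn]
            calc (A ^ n + (n : S) * A ^ (n - 1) * B + B ^ 2 * R) * (A + B)
                = A ^ n * A + (n : S) * (A ^ (n-1) * A) * B + A ^ n * B
                  + B ^ 2 * (A * R + (n : S) * (A ^ (n - 1)) + B * R) := by ring
              _ = _ := by rw [this, ← pow_succ]; ring
        _ = _ := by rw [hcast]; norm_num

/-- decomposition of a power series into constant coefficient and a shift -/
lemma decompose (y : S) :
    y = C (coeff 0 y) + X * PowerSeries.mk (fun b => coeff (b + 1) y) := by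
  refine PowerSeries.ext fun n => ?_
  cases n with
  | zero => simp [coeff_C]
  | succ n => simp [coeff_C, coeff_succ_X_mul, coeff_mk]

end Stmt7Aux3

namespace Stmt7Aux4

variable {p : ℕ} [Fact p.Prime] {k : Type*} [Field k] [CharP k p] [PerfectField k]
  {φ : PowerSeries (WittVector p k) →+* PowerSeries (WittVector p k)}

open PowerSeries Stmt7Aux Stmt7Aux2 Stmt7Aux3

local notation "W" => WittVector p k
local notation "S" => PowerSeries (WittVector p k)

lemma coeff_p_mul (m : ℕ) (z : S) : coeff m ((p : S) * z) = (p : W) * coeff m z := by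
  rw [← map_natCast (C (R := W)) p, coeff_C_mul]

lemma coeff_p_pow_mul (t m : ℕ) (z : S) :
    coeff m ((p : S) ^ t * z) = (p : W) ^ t * coeff m z := by
  rw [← map_natCast (C (R := W)) p, ← map_pow, coeff_C_mul]

lemma isUnit_S_of_not_dvd {y : S} (h : ¬ (p : W) ∣ coeff 0 y) : IsUnit y :=
  isUnit_iff_constantCoeff.mpr (by
    rw [← coeff_zero_eq_constantCoeff_apply]
    exact (isUnit_W_iff _).mpr h)

lemma p_mem_of_unit_mul {J : Ideal S} {v : S} (hv : IsUnit v) (h : (p : S) * v ∈ J) :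
    (p : S) ∈ J := by
  obtain ⟨vu, hvu⟩ := hv
  have h13 : (p : S) = ((p : S) * v) * (↑vu⁻¹ : S) := by
    rw [mul_assoc, ← hvu, Units.mul_inv, mul_one]
  rw [h13]
  exact J.mul_mem_right _ h

set_option maxHeartbeats 1000000 in
lemma core
    (hφu : φ (X : S) = (X : S) ^ p)
    (hφC : ∀ x : W, φ (C x) = C (WittVector.frobenius x))
    (e : ℕ) (he : 1 ≤ e) (a : ℕ → W) (E : S)
    (hE : E = (X : S) ^ e + ∑ j ∈ Finset.range e, C (a j) * (X : S) ^ j)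
    (haDvd : ∀ j < e, (p : W) ∣ a j)
    (ha0 : ¬ ((p : W) ^ 2 ∣ a 0))
    (q : ℕ) (hq : 1 ≤ q) (heq : e * q = p - 1)
    (J : Ideal S)
    (hJ : ∀ x ∈ J, E ^ q * x ∈ Ideal.map φ J)
    (hp2 : (p : S) ^ 2 ∈ J) (hpX : (p : S) * (X : S) ∈ J) (hX2 : (X : S) ^ 2 ∈ J) :
    (X : S) ∈ J ∧ (p : S) ∈ J := by
  classical
  have hp0 : 0 < p := (Fact.out : p.Prime).pos
  have hp2' : 2 ≤ p := (Fact.out : p.Prime).two_le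
  have hep : e ≤ p - 1 := by
    have h1 : e * 1 ≤ e * q := Nat.mul_le_mul_left e hq
    omega
  have hqp : q ≤ p - 1 := by
    have h1 : 1 * q ≤ e * q := Nat.mul_le_mul_right q he
    omega
  set d := p - 1 - e with hd
  have hde : d + e = p - 1 := by omega
  have hdp : d + e + 1 = p := by omega
  -- the quotient of E's lower coefficients by p
  set g : ℕ → W := fun j => if h : j < e then Classical.choose (haDvd j h) else 0 with hgdef
  have hg : ∀ j, (h : j < e) → a j = (p : W) * g j := by
    intro j h
    simp only [hgdef, dif_pos h]
    exact Classical.choose_spec (haDvd j h)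
  set G : S := ∑ j ∈ Finset.range e, C (g j) * (X : S) ^ j with hGdef
  have hEG : E = (X : S) ^ e + (p : S) * G := by
    rw [hE, hGdef, Finset.mul_sum]
    congr 1
    refine Finset.sum_congr rfl fun j hj => ?_
    rw [hg j (Finset.mem_range.mp hj), map_mul, map_natCast]
    ring
  have hGge : ∀ m, e ≤ m → coeff m G = 0 := by
    intro m hm
    rw [hGdef, map_sum]
    refine Finset.sum_eq_zero fun j hj => ?_
    rw [coeff_C_mul, coeff_X_pow, if_neg (by have := Finset.mem_range.mp hj; omega), mul_zero]
  have hG0 : coeff 0 G = g 0 := by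
    rw [hGdef, map_sum, Finset.sum_eq_single 0]
    · simp
    · intro j _ hj
      rw [coeff_C_mul, coeff_X_pow, if_neg (by omega), mul_zero]
    · intro h; exact absurd (Finset.mem_range.mpr he) h
  have hg0 : ¬ (p : W) ∣ g 0 := by
    rintro ⟨c, hc⟩
    exact ha0 ⟨c, by rw [hg 0 he, hc]; ring⟩
  have hqW : ¬ (p : W) ∣ (q : W) := by
    intro hdvd
    rw [pdvd_iff] at hdvd
    have h1 : (q : W).coeff 0 = (q : k) := by
      rw [← WittVector.constantCoeff_apply, map_natCast]
    rw [h1] at hdvd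
    have h2 : (p : ℕ) ∣ q := (CharP.cast_eq_zero_iff k p q).mp hdvd
    have h3 := Nat.le_of_dvd (by omega) h2
    omega
  -- binomial expansion of E^q
  obtain ⟨R, hER0⟩ := pow_add_sq ((X : S) ^ e) ((p : S) * G) q hq
  have hEq1 : e * q = d + e := by omega
  have hEq2 : e * (q - 1) = d := by
    cases q with
    | zero => omega
    | succ q' => simp only [Nat.add_sub_cancel]; rw [Nat.mul_succ] at hEq1; omega
  have hER : E ^ q = (X : S) ^ (d + e) + (p : S) * ((q : S) * (G * (X : S) ^ d))
      + (p : S) ^ 2 * (G ^ 2 * R) := by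
    rw [hEG, hER0, ← pow_mul, ← pow_mul, hEq1, hEq2]
    ring
  -- minimal index with a coefficient not divisible by p
  have hQex : ∃ r : ℕ, ∃ f, f ∈ J ∧ ¬ (p : W) ∣ coeff r f := by
    refine ⟨2, (X : S) ^ 2, hX2, ?_⟩
    rw [coeff_X_pow, if_pos rfl]
    exact prime_p_W.not_dvd_one
  set r := Nat.find hQex with hrdef
  have hQr := Nat.find_spec hQex
  have hminr : ∀ b, b < r → ∀ f ∈ J, (p : W) ∣ coeff b f := by
    intro b hb f hf
    by_contra hn
    exact Nat.find_min hQex hb ⟨f, hf, hn⟩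
  have hr1 : r ≤ 1 := by
    by_contra hrc
    push_neg at hrc
    obtain ⟨f, hfJ, hfr⟩ := hQr
    have hdig := (mem_map_iff hφu hφC J _).mp (hJ f hfJ)
    set n := d + e + r with hn
    have hj₀ : n % p < p := Nat.mod_lt _ hp0
    have hy : dig (n % p) (E ^ q * f) ∈ J := hdig _ hj₀
    have hcoeffn : coeff n (E ^ q * f)
        = coeff r f + (p : W) * coeff n (((q : S) * (G * (X : S) ^ d)
            + (p : S) * (G ^ 2 * R)) * f) := by
      have h1 : E ^ q * f = (X : S) ^ (d + e) * f
          + (p : S) * (((q : S) * (G * (X : S) ^ d) + (p : S) * (G ^ 2 * R)) * f) := by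
        rw [hER]; ring
      have h2 : n - (d + e) = r := by omega
      rw [h1, map_add, coeff_X_pow_mul', if_pos (by omega), h2, coeff_p_mul]
    have hb₀n : p * (n / p) + n % p = n := Nat.div_add_mod n p
    have hnd : ¬ (p : W) ∣ coeff (n / p) (dig (n % p) (E ^ q * f)) := by
      rw [coeff_dig, hb₀n, pdvd_Fi_iff, hcoeffn]
      rintro ⟨c, hc⟩
      refine hfr ⟨c - coeff n (((q : S) * (G * (X : S) ^ d) + (p : S) * (G ^ 2 * R)) * f), ?_⟩
      rw [mul_sub, ← hc]
      ring
    have hble : r ≤ n / p := Nat.find_min' hQex ⟨_, hy, hnd⟩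
    have hblt : n / p < r := by
      rw [Nat.div_lt_iff_lt_mul hp0]
      have h9 : 2 * (d + e) ≤ r * (d + e) := Nat.mul_le_mul_right _ (by omega)
      have h10 : r * p = r * (d + e) + r := by
        rw [show p = d + e + 1 by omega, Nat.mul_succ]
      omega
    omega
  by_cases hr0 : r = 0
  · -- J = ⊤
    obtain ⟨f, hfJ, hf0⟩ := hQr
    have hT : J = ⊤ := Ideal.eq_top_of_isUnit_mem J hfJ (isUnit_S_of_not_dvd (hr0 ▸ hf0))
    rw [hT]
    exact ⟨Submodule.mem_top, Submodule.mem_top⟩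
  · -- r = 1
    have hr : r = 1 := by omega
    obtain ⟨f, hfJ, hf1p⟩ := hQr
    have hf1 : ¬ (p : W) ∣ coeff 1 f := hr ▸ hf1p
    have hf0 : (p : W) ∣ coeff 0 f := hminr 0 (by omega) f hfJ
    set w : S := PowerSeries.mk (fun b => coeff (b + 1) f) with hwdef
    have hfdec : f = C (coeff 0 f) + X * w := decompose f
    have hwunit : IsUnit w := by
      apply isUnit_S_of_not_dvd
      rw [hwdef, coeff_mk]
      exact hf1
    obtain ⟨u, hu⟩ := hwunit
    obtain ⟨c, hc⟩ := hf0
    set B : S := (↑u⁻¹ : S) * C c with hBdef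
    set lam : W := constantCoeff B with hlamdef
    have hXdvd : (X : S) ∣ B - C lam := by
      rw [X_dvd_iff, map_sub, constantCoeff_C, hlamdef, sub_self]
    obtain ⟨D', hD'⟩ := hXdvd
    have hx' : (X : S) + (p : S) * C lam ∈ J := by
      have h10 : (↑u⁻¹ : S) * f = (X : S) + (p : S) * B := by
        conv_lhs => rw [hfdec]
        rw [mul_add, hc, map_mul, map_natCast]
        have h11 : (↑u⁻¹ : S) * ((X : S) * w) = (X : S) := by
          rw [← hu, mul_comm (X : S) (↑u : S), ← mul_assoc, Units.inv_mul, one_mul]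
        rw [h11, hBdef]
        ring
      have hB : B = C lam + (X : S) * D' := by
        rw [← hD']; ring
      have h9 : (X : S) + (p : S) * C lam
          = (↑u⁻¹ : S) * f - ((p : S) * (X : S)) * D' := by
        rw [h10, hB]; ring
      rw [h9]
      exact J.sub_mem (J.mul_mem_left _ hfJ) (J.mul_mem_right D' hpX)
    -- digit 0 analysis of E^q * (X + p·C λ)
    set x' : S := (X : S) + (p : S) * C lam with hx'def
    have hy₀J : dig 0 (E ^ q * x') ∈ J :=
      ((mem_map_iff hφu hφC J _).mp (hJ _ hx')) 0 hp0
    set Junk : S := (q : S) * ((X : S) ^ d * (G * C lam))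
        + G ^ 2 * R * ((X : S) + (p : S) * C lam) with hJunkdef
    have hExp : E ^ q * x' = (X : S) ^ (d + e + 1) + (p : S) * (C lam * (X : S) ^ (d + e))
        + (p : S) * ((q : S) * (G * (X : S) ^ (d + 1))) + (p : S) ^ 2 * Junk := by
      rw [hx'def, hER, hJunkdef]
      ring
    have hcoeffpb : ∀ b : ℕ, coeff (p * b) (E ^ q * x')
        = (if b = 1 then 1 else 0) + (p : W) ^ 2 * coeff (p * b) Junk := by
      intro b
      rw [hExp, map_add, map_add, map_add, coeff_p_pow_mul, coeff_p_mul, coeff_p_mul]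
      have h1 : coeff (p * b) ((X : S) ^ (d + e + 1)) = if b = 1 then 1 else 0 := by
        rw [coeff_X_pow]
        by_cases hb : b = 1
        · rw [if_pos hb, if_pos (by rw [hb, mul_one]; omega)]
        · rw [if_neg hb, if_neg]
          intro hcon
          have : p * b = p * 1 := by rw [mul_one]; omega
          exact hb (Nat.eq_of_mul_eq_mul_left hp0 this)
      have h2 : coeff (p * b) (C lam * (X : S) ^ (d + e)) = 0 := by
        rw [coeff_C_mul, coeff_X_pow, if_neg, mul_zero]
        cases b with
        | zero => omega
        | succ b' => rw [Nat.mul_succ]; omega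
      have h3 : coeff (p * b) ((q : S) * (G * (X : S) ^ (d + 1))) = 0 := by
        rw [← map_natCast (C (R := W)) q, coeff_C_mul, coeff_mul_X_pow']
        cases b with
        | zero =>
          rw [if_neg (by omega), mul_zero]
        | succ b' =>
          rw [if_pos (by rw [Nat.mul_succ]; omega), hGge _ (by rw [Nat.mul_succ]; omega),
            mul_zero]
      rw [h1, h2, h3]
      ring
    set Y : S := PowerSeries.mk (fun b => Fi (coeff (p * b) Junk)) with hYdef
    have hy₀ : dig 0 (E ^ q * x') = (X : S) + (p : S) ^ 2 * Y := by
      refine PowerSeries.ext fun b => ?_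
      have hrhs : coeff b ((X : S) + (p : S) ^ 2 * Y)
          = (if b = 1 then 1 else 0) + (p : W) ^ 2 * Fi (coeff (p * b) Junk) := by
        rw [map_add, coeff_X, coeff_p_pow_mul, hYdef, coeff_mk]
      rw [hrhs, coeff_dig, Nat.add_zero, hcoeffpb b, map_add, map_mul, map_pow, map_natCast]
      congr 1
      split_ifs <;> simp [Fi]
    have hsub : (p : S) * (C lam - (p : S) * Y) ∈ J := by
      have h11 : (p : S) * (C lam - (p : S) * Y) = x' - dig 0 (E ^ q * x') := by
        rw [hy₀, hx'def]; ring
      rw [h11]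
      exact J.sub_mem hx' hy₀J
    by_cases hlam : (p : W) ∣ lam
    · -- λ divisible by p : get X ∈ J first, then p ∈ J via digit d+1
      obtain ⟨lam', hlam'⟩ := hlam
      have hXJ : (X : S) ∈ J := by
        have h12 : (X : S) = x' - (p : S) ^ 2 * C lam' := by
          rw [hx'def, hlam', map_mul, map_natCast]
          ring
        rw [h12]
        exact J.sub_mem hx' (J.mul_mem_right _ hp2)
      have hzJ : dig (d + 1) (E ^ q * (X : S)) ∈ J :=
        ((mem_map_iff hφu hφC J _).mp (hJ _ hXJ)) (d + 1) (by omega)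
      have hEX : E ^ q * (X : S) = (X : S) ^ (d + e + 1)
          + (p : S) * ((q : S) * (G * (X : S) ^ (d + 1)))
          + (p : S) ^ 2 * (G ^ 2 * R * (X : S)) := by
        rw [hER]; ring
      set c₃ : W := coeff (d + 1) (G ^ 2 * R * (X : S)) with hc₃def
      have hcz : coeff 0 (dig (d + 1) (E ^ q * (X : S)))
          = (p : W) * Fi ((q : W) * g 0 + (p : W) * c₃) := by
        have h1 : coeff (d + 1) ((X : S) ^ (d + e + 1)) = 0 := by
          rw [coeff_X_pow, if_neg (by omega)]
        have h2 : coeff (d + 1) ((p : S) * ((q : S) * (G * (X : S) ^ (d + 1))))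
            = (p : W) * ((q : W) * g 0) := by
          rw [coeff_p_mul, ← map_natCast (C (R := W)) q, coeff_C_mul, coeff_mul_X_pow',
            if_pos le_rfl, Nat.sub_self, hG0]
        have h3 : coeff (d + 1) ((p : S) ^ 2 * (G ^ 2 * R * (X : S))) = (p : W) ^ 2 * c₃ := by
          rw [coeff_p_pow_mul, hc₃def]
        have hcoeffd1 : coeff (d + 1) (E ^ q * (X : S))
            = (p : W) * ((q : W) * g 0 + (p : W) * c₃) := by
          rw [hEX, map_add, map_add, h1, h2, h3]
          ring
        rw [coeff_dig, Nat.mul_zero, Nat.zero_add, hcoeffd1, map_mul, map_natCast]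
      have hunit : IsUnit (C (Fi ((q : W) * g 0 + (p : W) * c₃))) := by
        rw [isUnit_iff_constantCoeff, constantCoeff_C, isUnit_W_iff, pdvd_Fi_iff]
        rintro ⟨t, ht⟩
        have hdvd : (p : W) ∣ (q : W) * g 0 := ⟨t - c₃, by rw [mul_sub, ← ht]; ring⟩
        rcases prime_p_W.2.2 _ _ hdvd with h | h
        · exact hqW h
        · exact hg0 h
      have hCz : C (coeff 0 (dig (d + 1) (E ^ q * (X : S)))) ∈ J := by
        have hdc := decompose (dig (d + 1) (E ^ q * (X : S)))
        have h13 : C (coeff 0 (dig (d + 1) (E ^ q * (X : S))))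
            = dig (d + 1) (E ^ q * (X : S))
              - (X : S) * PowerSeries.mk (fun b => coeff (b + 1)
                  (dig (d + 1) (E ^ q * (X : S)))) := by
          rw [eq_sub_iff_add_eq]
          exact hdc.symm
        rw [h13]
        exact J.sub_mem hzJ (J.mul_mem_right _ hXJ)
      have hpJ : (p : S) ∈ J := by
        apply p_mem_of_unit_mul hunit
        have h14 : (p : S) * C (Fi ((q : W) * g 0 + (p : W) * c₃))
            = C (coeff 0 (dig (d + 1) (E ^ q * (X : S)))) := by
          rw [hcz, map_mul, map_natCast]
        rw [h14]
        exact hCz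
      exact ⟨hXJ, hpJ⟩
    · -- λ a unit : p ∈ J directly
      have hvunit : IsUnit (C lam - (p : S) * Y) := by
        apply isUnit_S_of_not_dvd
        rw [map_sub, coeff_C, if_pos rfl, coeff_p_mul]
        rintro ⟨t, ht⟩
        exact hlam ⟨t + coeff 0 Y, by rw [mul_add, ← ht]; ring⟩
      have hpJ : (p : S) ∈ J := p_mem_of_unit_mul hvunit hsub
      have hXJ : (X : S) ∈ J := by
        have h15 : (X : S) = x' - (p : S) * C lam := by rw [hx'def]; ring
        rw [h15]
        exact J.sub_mem hx' (J.mul_mem_right _ hpJ)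
      exact ⟨hXJ, hpJ⟩


end Stmt7Aux4

namespace Stmt7Aux5

variable {p : ℕ} [Fact p.Prime] {k : Type*} [Field k] [CharP k p] [PerfectField k]
  {φ : PowerSeries (WittVector p k) →+* PowerSeries (WittVector p k)}

open PowerSeries Stmt7Aux Stmt7Aux2 Stmt7Aux3 Stmt7Aux4

local notation "W" => WittVector p k
local notation "S" => PowerSeries (WittVector p k)

/-- the ideal (J : (p, X)) -/
def colonPX (J : Ideal (PowerSeries (WittVector p k))) :
    Ideal (PowerSeries (WittVector p k)) where
  carrier := {x | (p : S) * x ∈ J ∧ (X : S) * x ∈ J}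
  add_mem' := by
    rintro x y ⟨hx1, hx2⟩ ⟨hy1, hy2⟩
    constructor
    · rw [mul_add]; exact J.add_mem hx1 hy1
    · rw [mul_add]; exact J.add_mem hx2 hy2
  zero_mem' := by
    constructor <;> (rw [mul_zero]; exact J.zero_mem)
  smul_mem' := by
    intro r x ⟨hx1, hx2⟩
    constructor
    · rw [smul_eq_mul, show (p : S) * (r * x) = r * ((p : S) * x) by ring]
      exact J.mul_mem_left r hx1
    · rw [smul_eq_mul, show (X : S) * (r * x) = r * ((X : S) * x) by ring]
      exact J.mul_mem_left r hx2

lemma mem_colonPX {J : Ideal (PowerSeries (WittVector p k))} {x : S} :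
    x ∈ colonPX J ↔ (p : S) * x ∈ J ∧ (X : S) * x ∈ J := Iff.rfl

lemma le_colonPX (J : Ideal (PowerSeries (WittVector p k))) : J ≤ colonPX J := by
  intro x hx
  exact ⟨J.mul_mem_left _ hx, J.mul_mem_left _ hx⟩

lemma colon_stable (hφu : φ (X : S) = (X : S) ^ p)
    (hφC : ∀ x : W, φ (C x) = C (WittVector.frobenius x))
    (E' : S) (J : Ideal (PowerSeries (WittVector p k)))
    (hJ : ∀ x ∈ J, E' * x ∈ Ideal.map φ J) :
    ∀ x ∈ colonPX J, E' * x ∈ Ideal.map φ (colonPX J) := by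
  have hp0 : 0 < p := (Fact.out : p.Prime).pos
  rintro x ⟨hxp, hxX⟩
  have hdp : ∀ j, j < p → (p : S) * dig j (E' * x) ∈ J := by
    intro j hj
    have h1 := (mem_map_iff hφu hφC J _).mp (hJ _ hxp) j hj
    have h2 : E' * ((p : S) * x) = (p : S) * (E' * x) := by ring
    rwa [h2, dig_p_mul] at h1
  have hdX := (mem_map_iff hφu hφC J _).mp (hJ _ hxX)
  have h2 : E' * ((X : S) * x) = (X : S) * (E' * x) := by ring
  rw [h2] at hdX
  have hdsmall : ∀ j, j + 1 < p → dig j (E' * x) ∈ J := by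
    intro j hj
    have := hdX (j + 1) hj
    rwa [dig_X_succ] at this
  have hdlast : (X : S) * dig (p - 1) (E' * x) ∈ J := by
    have := hdX 0 hp0
    rwa [dig_X_zero] at this
  rw [mem_map_iff hφu hφC]
  intro j hj
  rw [mem_colonPX]
  by_cases hjs : j + 1 < p
  · have hJmem := hdsmall j hjs
    exact ⟨J.mul_mem_left _ hJmem, J.mul_mem_left _ hJmem⟩
  · have hjp : j = p - 1 := by omega
    exact ⟨hdp j hj, hjp ▸ hdlast⟩

lemma induction_main (hφu : φ (X : S) = (X : S) ^ p)
    (hφC : ∀ x : W, φ (C x) = C (WittVector.frobenius x))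
    (e : ℕ) (he : 1 ≤ e) (a : ℕ → W) (E : S)
    (hE : E = (X : S) ^ e + ∑ j ∈ Finset.range e, C (a j) * (X : S) ^ j)
    (haDvd : ∀ j < e, (p : W) ∣ a j)
    (ha0 : ¬ ((p : W) ^ 2 ∣ a 0))
    (q : ℕ) (hq : 1 ≤ q) (heq : e * q = p - 1) :
    ∀ M : ℕ, ∀ J : Ideal (PowerSeries (WittVector p k)),
      (∀ x ∈ J, E ^ q * x ∈ Ideal.map φ J) →
      (∀ u v : ℕ, M ≤ u + v → (p : S) ^ u * (X : S) ^ v ∈ J) →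
      (X : S) ∈ J ∧ (p : S) ∈ J := by
  intro M
  induction M with
  | zero =>
    intro J _ hbig
    have h1 : (1 : S) ∈ J := by simpa using hbig 0 0 le_rfl
    have hT : J = ⊤ := (Ideal.eq_top_iff_one J).mpr h1
    rw [hT]
    exact ⟨Submodule.mem_top, Submodule.mem_top⟩
  | succ M ih =>
    intro J hJ hbig
    have hbig' : ∀ u v : ℕ, M ≤ u + v → (p : S) ^ u * (X : S) ^ v ∈ colonPX J := by
      intro u v huv
      rw [mem_colonPX]
      constructor
      · rw [show (p : S) * ((p : S) ^ u * (X : S) ^ v) = (p : S) ^ (u + 1) * (X : S) ^ v by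
          rw [pow_succ]; ring]
        exact hbig (u + 1) v (by omega)
      · rw [show (X : S) * ((p : S) ^ u * (X : S) ^ v) = (p : S) ^ u * (X : S) ^ (v + 1) by
          rw [pow_succ]; ring]
        exact hbig u (v + 1) (by omega)
    obtain ⟨hX', hp'⟩ := ih (colonPX J) (colon_stable hφu hφC (E ^ q) J hJ) hbig'
    rw [mem_colonPX] at hX' hp'
    refine core hφu hφC e he a E hE haDvd ha0 q hq heq J hJ ?_ ?_ ?_
    · rw [show ((p : S)) ^ 2 = (p : S) * (p : S) by ring]
      exact hp'.1
    · exact hX'.1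
    · rw [show ((X : S)) ^ 2 = (X : S) * (X : S) by ring]
      exact hX'.2

end Stmt7Aux5


/-- **Theorem 3.3 (3) (cor control u-torsion), annihilator-ideal core.** With `𝔖`, `φ`, and the
Eisenstein polynomial `E` of degree `e` as usual: if `i ≥ 1`, `J ⊆ 𝔖` is an ideal containing `u^s`
and `p^N` with `E^{i-1}·J ⊆ φ(J)𝔖`, and `e·(i-1) = p-1`, then `u ∈ J` and `p ∈ J`. -/
theorem stmt7 (p : ℕ) [Fact p.Prime] (k : Type*) [Field k] [CharP k p] [PerfectField k]
    (φ : PowerSeries (WittVector p k) →+* PowerSeries (WittVector p k))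
    (hφu : φ PowerSeries.X = PowerSeries.X ^ p)
    (hφC : ∀ a : WittVector p k,
      φ (PowerSeries.C a) = PowerSeries.C (WittVector.frobenius a))
    (e : ℕ) (he : 1 ≤ e) (a : ℕ → WittVector p k)
    (E : PowerSeries (WittVector p k))
    (hE : E = PowerSeries.X ^ e +
      ∑ j ∈ Finset.range e, PowerSeries.C (a j) * PowerSeries.X ^ j)
    (haDvd : ∀ j < e, (p : WittVector p k) ∣ a j)
    (ha0 : ¬ ((p : WittVector p k) ^ 2 ∣ a 0))
    (i : ℕ) (hi : 1 ≤ i)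
    (J : Ideal (PowerSeries (WittVector p k)))
    (s N : ℕ)
    (hus : (PowerSeries.X : PowerSeries (WittVector p k)) ^ s ∈ J)
    (hpN : ((p : PowerSeries (WittVector p k)) ^ N) ∈ J)
    (hJ : ∀ x ∈ J, E ^ (i - 1) * x ∈ Ideal.map φ J)
    (hrange : e * (i - 1) = p - 1) :
    (PowerSeries.X : PowerSeries (WittVector p k)) ∈ J ∧ (p : PowerSeries (WittVector p k)) ∈ J := by
  have hp2' : 2 ≤ p := (Fact.out : p.Prime).two_le
  have hq : 1 ≤ i - 1 := by
    rcases Nat.eq_zero_or_pos (i - 1) with h | h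
    · rw [h, Nat.mul_zero] at hrange; omega
    · exact h
  refine Stmt7Aux5.induction_main hφu hφC e he a E hE haDvd ha0 (i - 1) hq hrange (N + s) J hJ ?_
  intro u v huv
  rcases le_or_gt N u with hNu | hNu
  · have h1 : (p : PowerSeries (WittVector p k)) ^ u * PowerSeries.X ^ v
        = ((p : PowerSeries (WittVector p k)) ^ (u - N) * PowerSeries.X ^ v)
          * (p : PowerSeries (WittVector p k)) ^ N := by
      have h2 : (p : PowerSeries (WittVector p k)) ^ (u - N)
          * (p : PowerSeries (WittVector p k)) ^ N
          = (p : PowerSeries (WittVector p k)) ^ u := by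
        rw [← pow_add]; congr 1; omega
      rw [← h2]; ring
    rw [h1]
    exact J.mul_mem_left _ hpN
  · have hsv : s ≤ v := by omega
    have h1 : (p : PowerSeries (WittVector p k)) ^ u * PowerSeries.X ^ v
        = ((p : PowerSeries (WittVector p k)) ^ u * PowerSeries.X ^ (v - s))
          * PowerSeries.X ^ s := by
      have h2 : (PowerSeries.X : PowerSeries (WittVector p k)) ^ (v - s)
          * PowerSeries.X ^ s = (PowerSeries.X : PowerSeries (WittVector p k)) ^ v := by
        rw [← pow_add]; congr 1; omega
      rw [← h2]; ring
    rw [h1]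
    exact J.mul_mem_left _ hus
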